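/- The polynomial representation of the Hecke generators satisfies the braid relation: T_i T_{i+1} T_i = T_{i+1} T_i T_{i+1} as operators on ℂ[x_1,...,x_n], for 1 ≤ i ≤ n-2. -/
import Mathlib


/-!
The polynomial representation of the Hecke generator
`T_i = t - ((x_i - t x_{i+1})/(x_i - x_{i+1})) (1 - s_i)` satisfies the quadratic
relation `(T_i - t)(T_i + 1) = 0` on polynomials, i.e. for every polynomial `h`,
`(T_i - t)((T_i + 1) h) = 0`.  We work over the field `ℚ(t)` (realized as
`RatFunc ℚ` with `t` the variable), and the operator acts on the fraction field
of the polynomial ring, where the division is defined.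
-/

set_option synthInstance.maxHeartbeats 1000000
set_option maxHeartbeats 1000000
noncomputable section

open MvPolynomial

/-- the polynomial ring `ℚ(t)[x_1, …, x_n]` -/
abbrev PolyR (n : ℕ) := MvPolynomial (Fin n) (RatFunc ℚ)

/-- its fraction field -/
abbrev FracK (n : ℕ) := FractionRing (PolyR n)

/-- the parameter `t` viewed inside the fraction field -/
def tK (n : ℕ) : FracK n := algebraMap (PolyR n) (FracK n) (C RatFunc.X)

/-- the variable `x_i` viewed inside the fraction field -/
def XK (n : ℕ) (i : Fin n) : FracK n := algebraMap (PolyR n) (FracK n) (X i)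

/-- the transposition of the variables `x_i` and `x_j`, extended to the fraction field -/
def sOp (n : ℕ) (i j : Fin n) : FracK n ≃+* FracK n :=
  IsFractionRing.ringEquivOfRingEquiv
    ((renameEquiv (RatFunc ℚ) (Equiv.swap i j)).toRingEquiv)

/-- the Hecke generator `T = t - ((x_i - t x_j)/(x_i - x_j))(1 - s_{ij})`,
acting on the fraction field of the polynomial ring -/
def TOp (n : ℕ) (i j : Fin n) (h : FracK n) : FracK n :=
  tK n * h - (XK n i - tK n * XK n j) / (XK n i - XK n j) * (h - sOp n i j h)

def pOp (n : ℕ) (σ : Equiv.Perm (Fin n)) : FracK n ≃+* FracK n :=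
  IsFractionRing.ringEquivOfRingEquiv ((renameEquiv (RatFunc ℚ) σ).toRingEquiv)

lemma sOp_eq (n : ℕ) (i j : Fin n) : sOp n i j = pOp n (Equiv.swap i j) := rfl

lemma pOp_algebraMap (n : ℕ) (σ : Equiv.Perm (Fin n)) (p : PolyR n) :
    pOp n σ (algebraMap (PolyR n) (FracK n) p)
      = algebraMap (PolyR n) (FracK n) (rename σ p) :=
  IsFractionRing.ringEquivOfRingEquiv_algebraMap _ p

lemma pOp_pOp (n : ℕ) (σ τ : Equiv.Perm (Fin n)) (x : FracK n) :
    pOp n σ (pOp n τ x) = pOp n (σ * τ) x := by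
  have h : ((pOp n σ).toRingHom.comp (pOp n τ).toRingHom) = (pOp n (σ * τ)).toRingHom := by
    apply IsLocalization.ringHom_ext (nonZeroDivisors (PolyR n))
    ext p
    · simp [RingHom.comp_apply, RingEquiv.coe_toRingHom, pOp_algebraMap, rename_C]
    · simp [RingHom.comp_apply, RingEquiv.coe_toRingHom, pOp_algebraMap, rename_X,
        Equiv.Perm.coe_mul]
  exact RingHom.congr_fun h x

lemma pOp_one (n : ℕ) (x : FracK n) : pOp n 1 x = x := by
  have h : (pOp n 1).toRingHom = RingHom.id (FracK n) := by
    apply IsLocalization.ringHom_ext (nonZeroDivisors (PolyR n))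
    ext p
    · simp [RingHom.comp_apply, RingEquiv.coe_toRingHom, pOp_algebraMap, rename_C]
    · simp [RingHom.comp_apply, RingEquiv.coe_toRingHom, pOp_algebraMap, rename_X]
  exact RingHom.congr_fun h x

lemma pOp_tK (n : ℕ) (σ : Equiv.Perm (Fin n)) : pOp n σ (tK n) = tK n := by
  rw [tK, pOp_algebraMap, rename_C]

lemma pOp_XK (n : ℕ) (σ : Equiv.Perm (Fin n)) (a : Fin n) :
    pOp n σ (XK n a) = XK n (σ a) := by
  rw [XK, pOp_algebraMap, rename_X]; rfl

set_option maxHeartbeats 1000000 in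
theorem key {K : Type*} [Field K] (T x1 x2 x3 A H1 H2 H3 H4 H5 : K)
    (d1 : x1 - x2 ≠ 0) (d2 : x2 - x3 ≠ 0) (d3 : x1 - x3 ≠ 0)
    (d4 : x2 - x1 ≠ 0) (d5 : x3 - x2 ≠ 0) (d6 : x3 - x1 ≠ 0) :
    T * (T * (T * A - (x1 - T * x2) / (x1 - x2) * (A - H1)) -
          (x2 - T * x3) / (x2 - x3) *
            (T * A - (x1 - T * x2) / (x1 - x2) * (A - H1) - (T * H2 - (x1 - T * x3) / (x1 - x3) * (H2 - H4)))) -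
      (x1 - T * x2) / (x1 - x2) *
        (T * (T * A - (x1 - T * x2) / (x1 - x2) * (A - H1)) -
            (x2 - T * x3) / (x2 - x3) *
              (T * A - (x1 - T * x2) / (x1 - x2) * (A - H1) - (T * H2 - (x1 - T * x3) / (x1 - x3) * (H2 - H4))) -
          (T * (T * H1 - (x2 - T * x1) / (x2 - x1) * (H1 - A)) -
            (x1 - T * x3) / (x1 - x3) *
              (T * H1 - (x2 - T * x1) / (x2 - x1) * (H1 - A) - (T * H3 - (x2 - T * x3) / (x2 - x3) * (H3 - H5))))) =
    T * (T * (T * A - (x2 - T * x3) / (x2 - x3) * (A - H2)) -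
          (x1 - T * x2) / (x1 - x2) *
            (T * A - (x2 - T * x3) / (x2 - x3) * (A - H2) - (T * H1 - (x1 - T * x3) / (x1 - x3) * (H1 - H3)))) -
      (x2 - T * x3) / (x2 - x3) *
        (T * (T * A - (x2 - T * x3) / (x2 - x3) * (A - H2)) -
            (x1 - T * x2) / (x1 - x2) *
              (T * A - (x2 - T * x3) / (x2 - x3) * (A - H2) - (T * H1 - (x1 - T * x3) / (x1 - x3) * (H1 - H3))) -
          (T * (T * H2 - (x3 - T * x2) / (x3 - x2) * (H2 - A)) -
            (x1 - T * x3) / (x1 - x3) *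
              (T * H2 - (x3 - T * x2) / (x3 - x2) * (H2 - A) - (T * H4 - (x1 - T * x2) / (x1 - x2) * (H4 - H5))))) := by
  have ha : (x1 - T*x2)/(x1 - x2) * (x1 - x2) = x1 - T*x2 := div_mul_cancel₀ _ d1
  have hap : (x2 - T*x1)/(x2 - x1) * (x2 - x1) = x2 - T*x1 := div_mul_cancel₀ _ d4
  have hb : (x2 - T*x3)/(x2 - x3) * (x2 - x3) = x2 - T*x3 := div_mul_cancel₀ _ d2
  have hbp : (x3 - T*x2)/(x3 - x2) * (x3 - x2) = x3 - T*x2 := div_mul_cancel₀ _ d5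
  have hc : (x1 - T*x3)/(x1 - x3) * (x1 - x3) = x1 - T*x3 := div_mul_cancel₀ _ d3
  have q1m : ((x2-T*x3)/(x2-x3) * ((x1-T*x3)/(x1-x3))
      - (x2-T*x1)/(x2-x1) * ((x1-T*x3)/(x1-x3))
      - (x1-T*x2)/(x1-x2) * ((x2-T*x3)/(x2-x3))
      + T*((x2-T*x1)/(x2-x1)) + T*((x1-T*x2)/(x1-x2)) - T^2)
      * ((x1-x2) * ((x2-x3) * (x1-x3))) = 0 := by
    linear_combination
      ((T - (x2-T*x3)/(x2-x3)) * ((x2-x3)*(x1-x3))) * ha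
      + (((x1-T*x3)/(x1-x3) - T) * ((x2-x3)*(x1-x3))) * hap
      + ((x1-T*x3)/(x1-x3) * ((x1-x2)*(x1-x3)) - (x1-T*x2)*(x1-x3)) * hb
      + ((x2-T*x3)*(x1-x2) + (x2-T*x1)*(x2-x3)) * hc
  have q2m : ((x3-T*x2)/(x3-x2) * ((x1-T*x3)/(x1-x3))
      - (x1-T*x2)/(x1-x2) * ((x1-T*x3)/(x1-x3))
      + (x1-T*x2)/(x1-x2) * ((x2-T*x3)/(x2-x3))
      - T*((x3-T*x2)/(x3-x2)) - T*((x2-T*x3)/(x2-x3)) + T^2)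
      * ((x1-x2) * ((x2-x3) * (x1-x3))) = 0 := by
    linear_combination
      (((x2-T*x3)/(x2-x3) - (x1-T*x3)/(x1-x3)) * ((x2-x3)*(x1-x3))) * ha
      + ((T - (x1-T*x3)/(x1-x3)) * ((x1-x2)*(x1-x3))) * hbp
      + ((x1-T*x2)*(x1-x3) - T*((x1-x2)*(x1-x3))) * hb
      + (-((x3-T*x2)*(x1-x2)) - (x1-T*x2)*(x2-x3)) * hc
  have hM : (x1-x2) * ((x2-x3) * (x1-x3)) ≠ 0 := mul_ne_zero d1 (mul_ne_zero d2 d3)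
  have q1 : (x2-T*x3)/(x2-x3) * ((x1-T*x3)/(x1-x3))
      - (x2-T*x1)/(x2-x1) * ((x1-T*x3)/(x1-x3))
      - (x1-T*x2)/(x1-x2) * ((x2-T*x3)/(x2-x3))
      + T*((x2-T*x1)/(x2-x1)) + T*((x1-T*x2)/(x1-x2)) - T^2 = 0 :=
    (mul_eq_zero.mp q1m).resolve_right hM
  have q2 : (x3-T*x2)/(x3-x2) * ((x1-T*x3)/(x1-x3))
      - (x1-T*x2)/(x1-x2) * ((x1-T*x3)/(x1-x3))
      + (x1-T*x2)/(x1-x2) * ((x2-T*x3)/(x2-x3))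
      - T*((x3-T*x2)/(x3-x2)) - T*((x2-T*x3)/(x2-x3)) + T^2 = 0 :=
    (mul_eq_zero.mp q2m).resolve_right hM
  linear_combination ((x1-T*x2)/(x1-x2) * (A - H1)) * q1
    + ((x2-T*x3)/(x2-x3) * (A - H2)) * q2

lemma XK_sub_ne (n : ℕ) {a b : Fin n} (hab : a ≠ b) : XK n a - XK n b ≠ 0 := by
  rw [XK, XK, ← map_sub]
  intro e
  apply hab
  have h0 : (X a - X b : PolyR n) = 0 := by
    apply IsFractionRing.injective (PolyR n) (FracK n)
    simpa using e
  exact X_injective (by rwa [sub_eq_zero] at h0)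

theorem hecke_braid_relation (n : ℕ) (i j k : Fin n)
    (hij : (i : ℕ) + 1 = (j : ℕ)) (hjk : (j : ℕ) + 1 = (k : ℕ))
    (h : PolyR n) :
    TOp n i j (TOp n j k (TOp n i j (algebraMap (PolyR n) (FracK n) h)))
      = TOp n j k (TOp n i j (TOp n j k (algebraMap (PolyR n) (FracK n) h))) := by
  have hij' : i ≠ j := Fin.ne_of_val_ne (by omega)
  have hjk' : j ≠ k := Fin.ne_of_val_ne (by omega)
  have hik' : i ≠ k := Fin.ne_of_val_ne (by omega)
  have hswk : Equiv.swap i j k = k := Equiv.swap_apply_of_ne_of_ne hik'.symm hjk'.symm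
  have hswi : Equiv.swap j k i = i := Equiv.swap_apply_of_ne_of_ne hij' hik'
  have e1 : Equiv.swap i j * Equiv.swap j k * Equiv.swap i j = Equiv.swap i k := by
    rw [Equiv.swap_comm i j, Equiv.swap_comm j k]
    exact Equiv.swap_mul_swap_mul_swap hjk'.symm hik'.symm
  have e2 : Equiv.swap j k * Equiv.swap i j * Equiv.swap j k = Equiv.swap i k := by
    exact (Equiv.swap_mul_swap_mul_swap hij' hik').trans (Equiv.swap_comm k i)
  have hbr : Equiv.swap i j * (Equiv.swap j k * Equiv.swap i j)
      = Equiv.swap j k * (Equiv.swap i j * Equiv.swap j k) := by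
    rw [← mul_assoc, ← mul_assoc, e1, e2]
  have d1 : XK n i - XK n j ≠ 0 := XK_sub_ne n hij'
  have d2 : XK n j - XK n k ≠ 0 := XK_sub_ne n hjk'
  have d3 : XK n i - XK n k ≠ 0 := XK_sub_ne n hik'
  have d4 : XK n j - XK n i ≠ 0 := XK_sub_ne n hij'.symm
  have d5 : XK n k - XK n j ≠ 0 := XK_sub_ne n hjk'.symm
  have d6 : XK n k - XK n i ≠ 0 := XK_sub_ne n hik'.symm
  simp only [TOp, sOp_eq, map_sub, map_mul, map_div₀, pOp_pOp, pOp_tK, pOp_XK,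
    Equiv.swap_mul_self, pOp_one, Equiv.swap_apply_left, Equiv.swap_apply_right,
    hswk, hswi, hbr]
  set A := algebraMap (PolyR n) (FracK n) h with hA
  set H5 := pOp n (Equiv.swap j k * (Equiv.swap i j * Equiv.swap j k)) A with h5
  set H3 := pOp n (Equiv.swap i j * Equiv.swap j k) A with h3
  set H4 := pOp n (Equiv.swap j k * Equiv.swap i j) A with h4
  set H1 := pOp n (Equiv.swap i j) A with h1
  set H2 := pOp n (Equiv.swap j k) A with h2
  set T := tK n with hT
  set x1 := XK n i with hx1
  set x2 := XK n j with hx2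
  set x3 := XK n k with hx3

  clear_value A H5 H3 H4 H1 H2 T x1 x2 x3
  exact key T x1 x2 x3 A H1 H2 H3 H4 H5 d1 d2 d3 d4 d5 d6
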